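/- Let R be a bounded operator on a Hilbert space H with R*R ≥ I (i.e., ‖Rx‖ ≥ ‖x‖ for all x). If M ⊆ H is a closed invariant subspace of R such that the restriction R|_M is unitary (as an operator on M), then M is a reducing subspace for R. -/

import Mathlib

open ComplexConjugate

theorem stmt2 {H : Type*} [NormedAddCommGroup H] [InnerProductSpace ℂ H] [CompleteSpace H]
    (R : H →L[ℂ] H) (hexp : ∀ x : H, ‖x‖ ≤ ‖R x‖)
    (M : Submodule ℂ H) (hMc : IsClosed (M : Set H))
    (hinv : ∀ x ∈ M, R x ∈ M) (hiso : ∀ x ∈ M, ‖R x‖ = ‖x‖)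
    (hsurj : ∀ y ∈ M, ∃ x ∈ M, R x = y) :
    ∀ x ∈ Mᗮ, R x ∈ Mᗮ := by
  intro x hx
  rw [Submodule.mem_orthogonal]
  intro m hm
  obtain ⟨u, huM, rfl⟩ := hsurj m hm
  set α : ℂ := inner ℂ (R u) (R x) with hα
  have hux : (inner ℂ u x : ℂ) = 0 := (Submodule.mem_orthogonal M x).mp hx u huM
  -- key inequality for any scalar c
  have key : ∀ c : ℂ, ‖c‖ ^ 2 * ‖x‖ ^ 2 ≤
      2 * Complex.re (c * α) + ‖c‖ ^ 2 * ‖R x‖ ^ 2 := by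
    intro c
    have h1 : ‖u + c • x‖ ^ 2 ≤ ‖R (u + c • x)‖ ^ 2 :=
      pow_le_pow_left₀ (norm_nonneg _) (hexp _) 2
    have hL : ‖u + c • x‖ ^ 2 = ‖u‖ ^ 2 + ‖c‖ ^ 2 * ‖x‖ ^ 2 := by
      rw [@norm_add_sq ℂ, inner_smul_right, hux, norm_smul]
      simp [mul_pow]
    have hR : ‖R (u + c • x)‖ ^ 2
        = ‖u‖ ^ 2 + 2 * Complex.re (c * α) + ‖c‖ ^ 2 * ‖R x‖ ^ 2 := by
      rw [map_add, map_smul, @norm_add_sq ℂ, inner_smul_right, norm_smul, hiso u huM]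
      simp [mul_pow, hα]
    rw [hL, hR] at h1
    linarith
  by_contra hne
  set t : ℝ := (‖R x‖ ^ 2 + 1)⁻¹ with ht
  have htpos : 0 < t := by positivity
  have := key (-(t : ℂ) * conj α)
  have hcc : conj α * α = ((‖α‖ ^ 2 : ℝ) : ℂ) := by
    rw [mul_comm, Complex.mul_conj, Complex.normSq_eq_norm_sq]
  rw [mul_assoc, hcc] at this
  have hre : (-(t : ℂ) * ((‖α‖ ^ 2 : ℝ) : ℂ)).re = -t * ‖α‖ ^ 2 := by
    rw [← Complex.ofReal_neg, ← Complex.ofReal_mul, Complex.ofReal_re]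
  rw [hre] at this
  have hn : ‖-(t : ℂ) * conj α‖ ^ 2 = t ^ 2 * ‖α‖ ^ 2 := by
    rw [norm_mul]
    simp [mul_pow, abs_of_pos htpos]
  rw [hn] at this
  have hαpos : 0 < ‖α‖ ^ 2 := pow_pos (norm_pos_iff.mpr hne) 2
  -- this : t^2‖α‖²‖x‖² ≤ 2*(-t‖α‖²) + t^2‖α‖²‖Rx‖²
  have hT : 0 < t * ‖α‖ ^ 2 := mul_pos htpos hαpos
  have h2' : (t * ‖x‖ ^ 2 + 2) * (t * ‖α‖ ^ 2) ≤ (t * ‖R x‖ ^ 2) * (t * ‖α‖ ^ 2) := by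
    nlinarith [this]
  have h2 : t * ‖x‖ ^ 2 + 2 ≤ t * ‖R x‖ ^ 2 := le_of_mul_le_mul_right h2' hT
  have h3 : t * ‖R x‖ ^ 2 < 1 := by
    rw [ht]
    rw [inv_mul_lt_iff₀ (by positivity)]
    nlinarith
  nlinarith [sq_nonneg ‖x‖, mul_nonneg htpos.le (sq_nonneg ‖x‖)]
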